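/- Let M be a free ℤ-module of finite rank s equipped with a symmetric ℤ-bilinear form b with nonzero discriminant, let α ∈ M, and let r be a positive integer. Equip the free ℤ-module ℤ ⊕ M ⊕ ℤ with the symmetric bilinear form ⟨(a,x,c),(a',x',c')⟩ = b(x,x') − a·c' − a'·c. Let N be the ℤ-submodule of ℤ ⊕ M ⊕ ℤ generated by (r, α, 0), (0, 0, 1), and the elements (0, x, 0) for x ∈ M. Then N is free of rank s + 2 and |disc(N)| = r² · |disc(M)|. -/

import Mathlib

/-- The Mukai pairing on `ℤ ⊕ M ⊕ ℤ` associated to a symmetric bilinear form `b` on `M`: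
`⟨(a,x,c),(a',x',c')⟩ = b(x,x') − a·c' − a'·c`. -/
def mukaiPairing {M : Type*} [AddCommGroup M] [Module ℤ M]
    (b : M →ₗ[ℤ] M →ₗ[ℤ] ℤ) (p q : ℤ × M × ℤ) : ℤ :=
  b p.2.1 q.2.1 - p.1 * q.2.2 - q.1 * p.2.2

/-- The lattice of twisted Mukai vectors `N^{α/r}`: the `ℤ`-submodule of `ℤ ⊕ M ⊕ ℤ`
generated by `(r, α, 0)`, `(0, 0, 1)` and the elements `(0, x, 0)` for `x ∈ M`. -/
def twistedMukaiLattice {M : Type*} [AddCommGroup M] [Module ℤ M]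
    (α : M) (r : ℕ) : Submodule ℤ (ℤ × M × ℤ) :=
  Submodule.span ℤ
    ({((r : ℤ), α, (0 : ℤ)), ((0 : ℤ), (0 : M), (1 : ℤ))} ∪
      Set.range (fun x : M => ((0 : ℤ), x, (0 : ℤ))))

section
variable {M : Type*} [AddCommGroup M] [Module ℤ M]

def tmFun (α : M) (r : ℕ) : ℤ × M × ℤ →ₗ[ℤ] ℤ × M × ℤ where
  toFun p := ((r : ℤ) * p.1, p.1 • α + p.2.1, p.2.2)
  map_add' p q := by
    refine Prod.ext ?_ (Prod.ext ?_ ?_)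
    · simp [mul_add]
    · simp only [Prod.fst_add, Prod.snd_add]; rw [add_zsmul]; abel
    · simp
  map_smul' m p := by
    refine Prod.ext ?_ (Prod.ext ?_ ?_)
    · simp; ring
    · simp only [Prod.smul_fst, Prod.smul_snd, RingHom.id_apply, smul_eq_mul]; rw [zsmul_add, mul_zsmul]
    · simp

theorem tmFun_inj (α : M) (r : ℕ) (hr : 0 < r) : Function.Injective (tmFun α r) := by
  intro p q h
  obtain ⟨h1, h2, h3⟩ : (r:ℤ) * p.1 = (r:ℤ) * q.1 ∧ p.1 • α + p.2.1 = q.1 • α + q.2.1 ∧ p.2.2 = q.2.2 := by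
    simpa [tmFun, Prod.ext_iff] using h
  have hr' : (r : ℤ) ≠ 0 := by exact_mod_cast hr.ne'
  have h1' : p.1 = q.1 := mul_left_cancel₀ hr' h1
  rw [h1'] at h2
  exact Prod.ext h1' (Prod.ext (add_left_cancel h2) h3)

theorem tmFun_range (α : M) (r : ℕ) :
    LinearMap.range (tmFun α r) = twistedMukaiLattice α r := by
  apply le_antisymm
  · rintro _ ⟨p, rfl⟩
    have : tmFun α r p = p.1 • ((r:ℤ), α, (0:ℤ)) + ((0:ℤ), p.2.1, (0:ℤ)) + p.2.2 • ((0:ℤ), (0:M), (1:ℤ)) := by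
      refine Prod.ext ?_ (Prod.ext ?_ ?_) <;> simp [tmFun, mul_comm, smul_zero, zsmul_zero]
    rw [this]
    refine add_mem (add_mem (Submodule.smul_mem _ _ ?_) ?_) (Submodule.smul_mem _ _ ?_)
    · exact Submodule.subset_span (Or.inl (Or.inl rfl))
    · exact Submodule.subset_span (Or.inr ⟨p.2.1, rfl⟩)
    · exact Submodule.subset_span (Or.inl (Or.inr rfl))
  · rw [twistedMukaiLattice, Submodule.span_le]
    rintro x (h | ⟨y, rfl⟩)
    · rcases h with h | h
      · exact ⟨(1, 0, 0), by simp [tmFun, h.symm]⟩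
      · simp only [Set.mem_singleton_iff] at h
        subst h
        exact ⟨(0, 0, 1), by simp [tmFun]⟩
    · exact ⟨(0, y, 0), by simp [tmFun]⟩
end

def transferBasis {N : Type*} [AddCommGroup N] {ι : Type*} (i1 i2 : Module ℤ N)
    (P : @Module.Basis ι ℤ N _ _ i1) : @Module.Basis ι ℤ N _ _ i2 :=
  (letI := AddCommGroup.uniqueIntModule (M := N); (Subsingleton.elim i1 i2)) ▸ P

theorem transferBasis_apply {N : Type*} [AddCommGroup N] {ι : Type*} (i1 i2 : Module ℤ N)
    (P : @Module.Basis ι ℤ N _ _ i1) (k : ι) : transferBasis i1 i2 P k = P k := by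
  have h : i1 = i2 := letI := AddCommGroup.uniqueIntModule (M := N); Subsingleton.elim i1 i2
  subst h
  rfl

def qEquiv (s : ℕ) : (Unit ⊕ (Fin s ⊕ Unit)) ≃ (Fin 2 ⊕ Fin s) where
  toFun := Sum.elim (fun _ => Sum.inl 1) (Sum.elim (fun i => Sum.inr i) (fun _ => Sum.inl 0))
  invFun := Sum.elim (![Sum.inr (Sum.inr Unit.unit), Sum.inl Unit.unit]) (fun i => Sum.inr (Sum.inl i))
  left_inv := by rintro (⟨⟩ | i | ⟨⟩) <;> rfl
  right_inv := by
    rintro (i | i)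
    · fin_cases i <;> rfl
    · rfl


/-- Let `M` be a free `ℤ`-module of rank `s` with a symmetric bilinear form
`b` of nonzero discriminant, `α ∈ M` and `r > 0`.  Then the lattice `N^{α/r}` of twisted
Mukai vectors is free of rank `s + 2`, and `|disc(N^{α/r})| = r² · |disc(M)|` for the Mukai
pairing. -/
theorem twistedMukaiLattice_disc
    {M : Type*} [AddCommGroup M] [Module ℤ M]
    (s : ℕ) (bM : Module.Basis (Fin s) ℤ M)
    (b : M →ₗ[ℤ] M →ₗ[ℤ] ℤ)
    (hsymm : ∀ x y : M, b x y = b y x)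
    (hdisc : (Matrix.of fun i j => b (bM i) (bM j)).det ≠ 0)
    (α : M) (r : ℕ) (hr : 0 < r) :
    ∃ c : Module.Basis (Fin (s + 2)) ℤ (twistedMukaiLattice α r),
      (Matrix.of fun i j =>
          mukaiPairing b (c i : ℤ × M × ℤ) (c j : ℤ × M × ℤ)).det.natAbs
        = r ^ 2 * (Matrix.of fun i j => b (bM i) (bM j)).det.natAbs := by
  classical
  have hrQ : (r : ℚ) ≠ 0 := by exact_mod_cast hr.ne'
  set f := tmFun α r with hf
  let E : (ℤ × M × ℤ) ≃ₗ[ℤ] twistedMukaiLattice α r :=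
    (LinearEquiv.ofInjective f (tmFun_inj α r hr)).trans
      (LinearEquiv.ofEq _ _ (tmFun_range α r))
  have hE : ∀ p, ((E p : twistedMukaiLattice α r) : ℤ × M × ℤ) = f p := fun p => rfl
  let P1 : Module.Basis (Fin s ⊕ Unit) ℤ (M × ℤ) :=
    transferBasis _ _ (bM.prod (Module.Basis.singleton Unit ℤ))
  have hP1 : ∀ k, P1 k = (bM.prod (Module.Basis.singleton Unit ℤ)) k :=
    transferBasis_apply _ _ _
  let P2 : Module.Basis (Unit ⊕ (Fin s ⊕ Unit)) ℤ (ℤ × M × ℤ) :=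
    transferBasis _ _ ((Module.Basis.singleton Unit ℤ).prod P1)
  have hP2 : ∀ k, P2 k = ((Module.Basis.singleton Unit ℤ).prod P1) k :=
    transferBasis_apply _ _ _
  let P : Module.Basis (Fin 2 ⊕ Fin s) ℤ (ℤ × M × ℤ) := P2.reindex (qEquiv s)
  have hPval : ∀ k, P k = P2 ((qEquiv s).symm k) := fun k => P2.reindex_apply (qEquiv s) k
  let v : Fin 2 ⊕ Fin s → ℤ × M × ℤ :=
    Sum.elim ![((0:ℤ), (0:M), (1:ℤ)), ((r:ℤ), α, (0:ℤ))] (fun i => ((0:ℤ), bM i, (0:ℤ)))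
  have hPf : ∀ k, f (P k) = v k := by
    rintro (k | i) <;>
      [skip; (first | skip)]
    · fin_cases k <;>
        simp [hPval, hP2, hP1, v, qEquiv, Module.Basis.prod_apply, Module.Basis.singleton_apply, hf, tmFun,
          Prod.ext_iff]
    · simp [hPval, hP2, hP1, v, qEquiv, Module.Basis.prod_apply, Module.Basis.singleton_apply, hf, tmFun,
        Prod.ext_iff]
  let eqIdx : (Fin 2 ⊕ Fin s) ≃ Fin (s + 2) :=
    finSumFinEquiv.trans (finCongr (by omega))
  let c : Module.Basis (Fin (s + 2)) ℤ (twistedMukaiLattice α r) := (P.map E).reindex eqIdx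
  refine ⟨c, ?_⟩
  have hc : ∀ i, (c i : ℤ × M × ℤ) = v (eqIdx.symm i) := by
    intro i
    have h1 : c i = E (P (eqIdx.symm i)) := by
      rw [show c i = (P.map E) (eqIdx.symm i) from Module.Basis.reindex_apply _ _ i, Module.Basis.map_apply]
    rw [h1, hE, hPf]
  let M' : Matrix (Fin 2 ⊕ Fin s) (Fin 2 ⊕ Fin s) ℤ :=
    Matrix.of fun k l => mukaiPairing b (v k) (v l)
  have hG : (Matrix.of fun i j =>
      mukaiPairing b (c i : ℤ × M × ℤ) (c j : ℤ × M × ℤ))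
      = M'.submatrix eqIdx.symm eqIdx.symm := by
    ext i j
    simp [M', hc]
  rw [hG, Matrix.det_submatrix_equiv_self]
  -- block decomposition
  set Dm : Matrix (Fin s) (Fin s) ℤ := Matrix.of fun i j => b (bM i) (bM j) with hDm
  let A : Matrix (Fin 2) (Fin 2) ℤ := !![(0:ℤ), -(r:ℤ); -(r:ℤ), b α α]
  let Bm : Matrix (Fin 2) (Fin s) ℤ := Matrix.of fun k j => ![(0:ℤ), b α (bM j)] k
  let Cm : Matrix (Fin s) (Fin 2) ℤ := Matrix.of fun i k => ![(0:ℤ), b (bM i) α] k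
  have hM' : M' = Matrix.fromBlocks A Bm Cm Dm := by
    ext (k | i) (l | j)
    · fin_cases k <;> fin_cases l <;>
        simp [M', v, A, mukaiPairing, Matrix.fromBlocks]
    · fin_cases k <;> simp [M', v, Bm, mukaiPairing, Matrix.fromBlocks]
    · fin_cases l <;> simp [M', v, Cm, mukaiPairing, Matrix.fromBlocks]
    · simp [M', v, Dm, mukaiPairing, Matrix.fromBlocks]
  -- determinant over ℚ
  have hdet : M'.det = -((r:ℤ)^2) * Dm.det := by
    have hinj : Function.Injective (Int.castRingHom ℚ) := fun a b h => by
      simpa using h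
    apply hinj
    · rw [RingHom.map_det (Int.castRingHom ℚ) M', hM', RingHom.mapMatrix_apply]
      rw [show (Matrix.fromBlocks A Bm Cm Dm).map (Int.castRingHom ℚ)
          = Matrix.fromBlocks (A.map (Int.castRingHom ℚ)) (Bm.map (Int.castRingHom ℚ))
            (Cm.map (Int.castRingHom ℚ)) (Dm.map (Int.castRingHom ℚ)) from
        Matrix.fromBlocks_map A Bm Cm Dm (Int.castRingHom ℚ)]
      set A' := A.map (Int.castRingHom ℚ) with hA'
      set B' := Bm.map (Int.castRingHom ℚ) with hB'
      set C' := Cm.map (Int.castRingHom ℚ) with hC'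
      set D' := Dm.map (Int.castRingHom ℚ) with hD'
      have hAdet : A'.det = -((r:ℚ)^2) := by
        rw [hA', ← RingHom.mapMatrix_apply, ← RingHom.map_det]
        have : A.det = -((r:ℤ)^2) := by
          simp [A, Matrix.det_fin_two_of]; ring
        rw [this]
        simp
      haveI : Invertible A' :=
        A'.invertibleOfIsUnitDet (isUnit_iff_ne_zero.2 (by rw [hAdet]; exact neg_ne_zero.2 (pow_ne_zero 2 hrQ)))
      rw [Matrix.det_fromBlocks₁₁]
      have hCAB : C' * ⅟A' * B' = 0 := by
        let F : Matrix (Fin s) (Fin 2) ℚ := Matrix.of fun i k => ![-(b (bM i) α : ℚ)/r, 0] k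
        have hFA : F * A' = C' := by
          ext i k
          fin_cases k <;>
            simp [Matrix.mul_apply, Fin.sum_univ_two, F, hA', A, hC', Cm,
              Matrix.map_apply] <;> field_simp
        have hCA : C' * ⅟A' = F := by
          rw [← hFA, Matrix.mul_invOf_cancel_right]
        rw [hCA]
        ext i j
        simp [Matrix.mul_apply, Fin.sum_univ_two, F, hB', Bm, Matrix.map_apply]
      rw [hCAB, sub_zero, hAdet, hD', ← RingHom.mapMatrix_apply, ← RingHom.map_det]
      simp only [map_neg, map_mul, map_pow, Int.coe_castRingHom]
      push_cast
      ring
  rw [hdet]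
  simp [Int.natAbs_mul, Int.natAbs_neg, Int.natAbs_pow]
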